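/- Dynamic programming recursion for the optimal on-the-line quantizer is correct: let s₁ < ... < s_m be candidate boundary values and, for labeled 2D points, define E(s_i, b) as the minimum number of misclassified points among points with both coordinates ≤ s_i using b common boundaries from {s₁,...,s_{i−1}}. Then E(s_i, b) = min over ℓ < i of [ E(s_ℓ, b−1) + min over classes c of |{j : s_ℓ < x₁^(j) ≤ s_i, s_ℓ < x₂^(j) ≤ s_i, y^(j) = c}| ], for linearly separable data (separated by x₁ = x₂). -/

import Mathlib

open Finset

/-- Label of a 2D point: `true` iff `x₁ > x₂` (linearly separable by the line `x₁ = x₂`). -/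
noncomputable def lbl12 (p : ℝ × ℝ) : Bool := decide (p.2 < p.1)

/-- Cell index of a scalar under boundary set `B` (bins of the form `(d_j, d_{j+1}]`). -/
noncomputable def enc12 (B : Finset ℝ) (u : ℝ) : ℕ := (B.filter (fun dd => dd < u)).card

/-- Points with both coordinates at most `t`. -/
noncomputable def pts12 (N : ℕ) (x : Fin N → ℝ × ℝ) (t : ℝ) : Finset (Fin N) :=
  univ.filter (fun j => (x j).1 ≤ t ∧ (x j).2 ≤ t)

/-- Combined message of point `j` under the on-the-line quantizer with common boundaries `B`. -/
noncomputable def msg12 (N : ℕ) (x : Fin N → ℝ × ℝ) (B : Finset ℝ) (j : Fin N) : ℕ × ℕ :=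
  (enc12 B (x j).1, enc12 B (x j).2)

/-- Misclassification count (majority decoder in each cell) of boundary set `B`, restricted to
points with both coordinates at most `t`. -/
noncomputable def mis12 (N : ℕ) (x : Fin N → ℝ × ℝ) (B : Finset ℝ) (t : ℝ) : ℕ :=
  ∑ z ∈ (pts12 N x t).image (msg12 N x B),
    (((pts12 N x t).filter (fun j => msg12 N x B j = z)).card -
      max (((pts12 N x t).filter (fun j => msg12 N x B j = z ∧ lbl12 (x j) = true)).card)
          (((pts12 N x t).filter (fun j => msg12 N x B j = z ∧ lbl12 (x j) = false)).card))

/-- `Eopt12 N x s i b`: minimum misclassification over points with both coordinates `≤ s i`,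
using `b` common boundaries taken from `{s ℓ : ℓ < i}`. -/
noncomputable def Eopt12 (N : ℕ) (x : Fin N → ℝ × ℝ) {m : ℕ} (s : Fin m → ℝ) (i : Fin m) (b : ℕ) : ℕ :=
  sInf {L | ∃ B : Finset ℝ,
    B ⊆ (univ.filter (fun j : Fin m => j < i)).image s ∧ B.card = b ∧ L = mis12 N x B (s i)}

/-- Number of class-`c` points in the corner region `(a, t] × (a, t]`. -/
noncomputable def cost12 (N : ℕ) (x : Fin N → ℝ × ℝ) (a t : ℝ) (c : Bool) : ℕ :=
  (univ.filter (fun j : Fin N =>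
      a < (x j).1 ∧ (x j).1 ≤ t ∧ a < (x j).2 ∧ (x j).2 ≤ t ∧ lbl12 (x j) = c)).card

lemma enc12_le (B : Finset ℝ) (u : ℝ) : enc12 B u ≤ B.card := card_filter_le _ _

lemma enc12_mono (B : Finset ℝ) {u v : ℝ} (h : u ≤ v) : enc12 B u ≤ enc12 B v := by
  apply card_le_card
  intro d hd
  rw [mem_filter] at *
  exact ⟨hd.1, lt_of_lt_of_le hd.2 h⟩

lemma lt_of_enc12_lt {B : Finset ℝ} {u v : ℝ} (h : enc12 B u < enc12 B v) : u < v := by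
  by_contra hc
  exact absurd (enc12_mono B (not_lt.1 hc)) (not_le.2 h)

lemma enc12_eq_card {B : Finset ℝ} {u : ℝ} (h : ∀ d ∈ B, d < u) : enc12 B u = B.card := by
  unfold enc12; rw [filter_true_of_mem h]

lemma enc12_lt_card {B : Finset ℝ} {u d : ℝ} (hd : d ∈ B) (h : u ≤ d) :
    enc12 B u < B.card := by
  apply card_lt_card
  refine ⟨filter_subset _ _, fun hsub => ?_⟩
  have := hsub hd
  rw [mem_filter] at this
  exact absurd this.2 (not_lt.2 h)

lemma exists_ge_of_enc12_lt {B : Finset ℝ} {u : ℝ} (h : enc12 B u < B.card) :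
    ∃ d ∈ B, u ≤ d := by
  by_contra hc
  push_neg at hc
  exact absurd (enc12_eq_card (fun d hd => hc d hd)) (Nat.ne_of_lt h)

lemma enc12_insert_of_le {a : ℝ} (B' : Finset ℝ) {u : ℝ} (h : u ≤ a) :
    enc12 (insert a B') u = enc12 B' u := by
  unfold enc12
  rw [filter_insert, if_neg (not_lt.2 h)]


/-- class-count partition within a cell -/
lemma cell_partition (N : ℕ) (x : Fin N → ℝ × ℝ) (P : Finset (Fin N)) (q : Fin N → Prop)
    [DecidablePred q] :
    (P.filter (fun j => q j ∧ lbl12 (x j) = true)).card +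
      (P.filter (fun j => q j ∧ lbl12 (x j) = false)).card = (P.filter q).card := by
  rw [← filter_filter, ← filter_filter]
  have := Finset.card_filter_add_card_filter_not
    (s := P.filter q) (p := fun j => lbl12 (x j) = true)
  simp only [Bool.not_eq_true] at this
  convert this using 3

/-- each summand equals the min of the class counts -/
lemma term_eq_min (N : ℕ) (x : Fin N → ℝ × ℝ) (P : Finset (Fin N)) (q : Fin N → Prop)
    [DecidablePred q] :
    (P.filter q).card -
      max (P.filter (fun j => q j ∧ lbl12 (x j) = true)).card
          (P.filter (fun j => q j ∧ lbl12 (x j) = false)).card =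
    min (P.filter (fun j => q j ∧ lbl12 (x j) = true)).card
        (P.filter (fun j => q j ∧ lbl12 (x j) = false)).card := by
  rw [← cell_partition N x P q]
  rcases le_total (P.filter (fun j => q j ∧ lbl12 (x j) = true)).card
      (P.filter (fun j => q j ∧ lbl12 (x j) = false)).card with h | h
  · rw [max_eq_right h, min_eq_left h]; omega
  · rw [max_eq_left h, min_eq_right h]; omega

noncomputable def dterm (N : ℕ) (x : Fin N → ℝ × ℝ) (B : Finset ℝ) (t : ℝ) (k : ℕ) : ℕ :=
  min (((pts12 N x t).filter (fun j => msg12 N x B j = (k, k) ∧ lbl12 (x j) = true)).card)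
      (((pts12 N x t).filter (fun j => msg12 N x B j = (k, k) ∧ lbl12 (x j) = false)).card)

lemma mis12_eq_sum_diag (N : ℕ) (x : Fin N → ℝ × ℝ) (B : Finset ℝ) (t : ℝ) :
    mis12 N x B t = ∑ k ∈ Finset.range (B.card + 1), dterm N x B t k := by
  unfold mis12
  have h1 : ∀ z : ℕ × ℕ,
      ((pts12 N x t).filter (fun j => msg12 N x B j = z)).card -
        max (((pts12 N x t).filter (fun j => msg12 N x B j = z ∧ lbl12 (x j) = true)).card)
            (((pts12 N x t).filter (fun j => msg12 N x B j = z ∧ lbl12 (x j) = false)).card) =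
      min (((pts12 N x t).filter (fun j => msg12 N x B j = z ∧ lbl12 (x j) = true)).card)
          (((pts12 N x t).filter (fun j => msg12 N x B j = z ∧ lbl12 (x j) = false)).card) :=
    fun z => term_eq_min N x _ _
  rw [Finset.sum_congr rfl (fun z _ => h1 z)]
  -- extend to the full product of ranges
  have hsub : (pts12 N x t).image (msg12 N x B) ⊆
      (Finset.range (B.card + 1)) ×ˢ (Finset.range (B.card + 1)) := by
    intro z hz
    rw [mem_image] at hz
    obtain ⟨j, _, hj⟩ := hz
    subst hj
    simp only [mem_product, mem_range, Nat.lt_succ_iff]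
    exact ⟨enc12_le _ _, enc12_le _ _⟩
  rw [Finset.sum_subset hsub ?h0]
  case h0 =>
    intro z _ hz
    have : (pts12 N x t).filter (fun j => msg12 N x B j = z ∧ lbl12 (x j) = true) = ∅ := by
      rw [filter_eq_empty_iff]
      intro j hj ⟨hm, _⟩
      exact hz (mem_image.2 ⟨j, hj, hm⟩)
    rw [this]
    simp
  -- drop off-diagonal terms
  have hdsub : (Finset.range (B.card + 1)).image (fun k => (k, k)) ⊆
      (Finset.range (B.card + 1)) ×ˢ (Finset.range (B.card + 1)) := by
    intro z hz
    rw [mem_image] at hz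
    obtain ⟨k, hk, hkz⟩ := hz
    subst hkz
    simp only [mem_product]
    exact ⟨hk, hk⟩
  rw [← Finset.sum_subset hdsub ?hoff]
  case hoff =>
    intro z hzp hz
    have hne : z.1 ≠ z.2 := by
      intro h
      apply hz
      rw [mem_image]
      refine ⟨z.1, ?_, Prod.ext rfl h⟩
      exact (mem_product.1 hzp).1
    rcases Nat.lt_or_ge z.1 z.2 with hlt | hge
    · -- all points in cell have x1 < x2, so true-class empty
      have : (pts12 N x t).filter (fun j => msg12 N x B j = z ∧ lbl12 (x j) = true) = ∅ := by
        rw [filter_eq_empty_iff]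
        intro j _ ⟨hm, hl⟩
        have hx : (x j).1 < (x j).2 := by
          apply lt_of_enc12_lt (B := B)
          have h1 : enc12 B (x j).1 = z.1 := congrArg Prod.fst hm
          have h2 : enc12 B (x j).2 = z.2 := congrArg Prod.snd hm
          omega
        simp [lbl12] at hl
        exact absurd hx (not_lt.2 (le_of_lt hl))
      rw [this]
      simp
    · have hgt : z.2 < z.1 := lt_of_le_of_ne hge (fun h => hne h.symm)
      have : (pts12 N x t).filter (fun j => msg12 N x B j = z ∧ lbl12 (x j) = false) = ∅ := by
        rw [filter_eq_empty_iff]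
        intro j _ ⟨hm, hl⟩
        have hx : (x j).2 < (x j).1 := by
          apply lt_of_enc12_lt (B := B)
          have h1 : enc12 B (x j).1 = z.1 := congrArg Prod.fst hm
          have h2 : enc12 B (x j).2 = z.2 := congrArg Prod.snd hm
          omega
        simp [lbl12] at hl
        exact absurd hx (not_lt.2 hl)
      rw [this]
      simp
  rw [Finset.sum_image ?hinj]
  case hinj => intro a _ b _ h; exact (Prod.ext_iff.1 h).1
  rfl

lemma cell_low_iff {a t : ℝ} {B' : Finset ℝ} (hB' : ∀ d ∈ B', d < a) (hat : a < t)
    {k : ℕ} (hk : k ≤ B'.card) (ha : a ∉ B') (u : ℝ) :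
    (u ≤ t ∧ enc12 (insert a B') u = k) ↔ (u ≤ a ∧ enc12 B' u = k) := by
  have hcard : (insert a B').card = B'.card + 1 := card_insert_of_notMem ha
  constructor
  · rintro ⟨hut, henc⟩
    have hlt : enc12 (insert a B') u < (insert a B').card := by omega
    obtain ⟨d, hd, hud⟩ := exists_ge_of_enc12_lt hlt
    have hda : d ≤ a := by
      rcases mem_insert.1 hd with h | h
      · exact le_of_eq h
      · exact le_of_lt (hB' d h)
    have hua : u ≤ a := le_trans hud hda
    rw [enc12_insert_of_le B' hua] at henc
    exact ⟨hua, henc⟩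
  · rintro ⟨hua, henc⟩
    exact ⟨le_trans hua (le_of_lt hat), by rw [enc12_insert_of_le B' hua]; exact henc⟩

lemma cell_top_iff {a t : ℝ} {B' : Finset ℝ} (hB' : ∀ d ∈ B', d < a) (ha : a ∉ B') (u : ℝ) :
    (u ≤ t ∧ enc12 (insert a B') u = (insert a B').card) ↔ (a < u ∧ u ≤ t) := by
  constructor
  · rintro ⟨hut, henc⟩
    by_contra hc
    push_neg at hc
    have hua : u ≤ a := by
      by_contra hau
      push_neg at hau
      exact absurd hut (not_le.2 (hc hau))
    exact absurd henc (Nat.ne_of_lt (enc12_lt_card (mem_insert_self a B') hua))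
  · rintro ⟨hau, hut⟩
    refine ⟨hut, enc12_eq_card ?_⟩
    intro d hd
    rcases mem_insert.1 hd with h | h
    · exact h ▸ hau
    · exact lt_trans (hB' d h) hau

lemma mis12_split (N : ℕ) (x : Fin N → ℝ × ℝ) {a t : ℝ} {B' : Finset ℝ}
    (hB' : ∀ d ∈ B', d < a) (hat : a < t) :
    mis12 N x (insert a B') t =
      mis12 N x B' a + min (cost12 N x a t true) (cost12 N x a t false) := by
  have ha : a ∉ B' := fun h => lt_irrefl a (hB' a h)
  have hcard : (insert a B').card = B'.card + 1 := card_insert_of_notMem ha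
  rw [mis12_eq_sum_diag, mis12_eq_sum_diag, hcard, Finset.sum_range_succ]
  congr 1
  · -- low cells agree
    apply Finset.sum_congr rfl
    intro k hk
    rw [mem_range, Nat.lt_succ_iff] at hk
    unfold dterm
    have hfilt : ∀ c : Bool,
        (pts12 N x t).filter (fun j => msg12 N x (insert a B') j = (k, k) ∧ lbl12 (x j) = c) =
        (pts12 N x a).filter (fun j => msg12 N x B' j = (k, k) ∧ lbl12 (x j) = c) := by
      intro c
      ext j
      simp only [pts12, msg12, mem_filter, mem_univ, true_and, Prod.mk.injEq]
      have h1 := cell_low_iff hB' hat hk ha (x j).1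
      have h2 := cell_low_iff hB' hat hk ha (x j).2
      tauto
    rw [hfilt true, hfilt false]
  · -- top cell is the corner
    unfold dterm
    have hfilt : ∀ c : Bool,
        (pts12 N x t).filter (fun j =>
            msg12 N x (insert a B') j = (B'.card + 1, B'.card + 1) ∧ lbl12 (x j) = c) =
        univ.filter (fun j : Fin N =>
            a < (x j).1 ∧ (x j).1 ≤ t ∧ a < (x j).2 ∧ (x j).2 ≤ t ∧ lbl12 (x j) = c) := by
      intro c
      ext j
      simp only [pts12, msg12, mem_filter, mem_univ, true_and, Prod.mk.injEq]
      have h1 := cell_top_iff (t := t) hB' ha (x j).1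
      have h2 := cell_top_iff (t := t) hB' ha (x j).2
      rw [hcard] at h1 h2
      tauto
    rw [hfilt true, hfilt false]
    rfl


/-- Bellman recursion for the optimal on-the-line quantizer with linearly separable data:
`E(s_i, b) = min_{ℓ < i} [ E(s_ℓ, b−1) + min_c |{j : s_ℓ < x₁,x₂ ≤ s_i, y^(j) = c}| ]`. -/
theorem stmt_12 (N m : ℕ) (x : Fin N → ℝ × ℝ)
    (hsep : ∀ j, (x j).1 ≠ (x j).2)
    (s : Fin m → ℝ) (hs : StrictMono s) (i : Fin m) (b : ℕ)
    (hb : 1 ≤ b) (hbi : b ≤ (i : ℕ)) :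
    Eopt12 N x s i b =
      sInf {v | ∃ ℓ : Fin m, ℓ < i ∧ b - 1 ≤ (ℓ : ℕ) ∧
        v = Eopt12 N x s ℓ (b - 1) +
            min (cost12 N x (s ℓ) (s i) true) (cost12 N x (s ℓ) (s i) false)} := by
  have hImg : ∀ i' : Fin m, ((univ.filter (fun j : Fin m => j < i')).image s).card = (i' : ℕ) := by
    intro i'
    rw [Finset.card_image_of_injective _ hs.injective]
    have he : univ.filter (fun j : Fin m => j < i') = Finset.Iio i' := by
      ext j; simp
    rw [he, Fin.card_Iio]
  have hNE : ∀ (i' : Fin m) (b' : ℕ), b' ≤ (i' : ℕ) →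
      {L | ∃ B : Finset ℝ,
        B ⊆ (univ.filter (fun j : Fin m => j < i')).image s ∧ B.card = b' ∧
          L = mis12 N x B (s i')}.Nonempty := by
    intro i' b' hbi'
    obtain ⟨B, hBsub, hBcard⟩ := Finset.exists_subset_card_eq (s := (univ.filter (fun j : Fin m => j < i')).image s) (n := b') (by rw [hImg i']; exact hbi')
    exact ⟨mis12 N x B (s i'), B, hBsub, hBcard, rfl⟩
  apply le_antisymm
  · -- LHS ≤ RHS
    apply le_csInf
    · -- RHS set nonempty
      have hi1 : 1 ≤ (i : ℕ) := le_trans hb hbi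
      refine ⟨_, ⟨⟨(i : ℕ) - 1, by omega⟩, ?_, ?_, rfl⟩⟩
      · rw [Fin.lt_def]; simp; omega
      · simp; omega
    · rintro v ⟨ℓ, hℓi, hbℓ, rfl⟩
      -- pick an optimal B' for (ℓ, b-1)
      have hmem := Nat.sInf_mem (hNE ℓ (b - 1) hbℓ)
      obtain ⟨B', hB'sub, hB'card, hB'val⟩ := hmem
      have hlta : ∀ d ∈ B', d < s ℓ := by
        intro d hd
        obtain ⟨j, hj, rfl⟩ := Finset.mem_image.1 (hB'sub hd)
        rw [mem_filter] at hj
        exact hs hj.2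
      have hat : s ℓ < s i := hs hℓi
      have hsplit := mis12_split N x hlta hat
      have hanotin : s ℓ ∉ B' := fun h => lt_irrefl _ (hlta _ h)
      -- membership of insert (s ℓ) B' in the (i, b) set
      have hmem2 : mis12 N x (insert (s ℓ) B') (s i) ∈
          {L | ∃ B : Finset ℝ,
            B ⊆ (univ.filter (fun j : Fin m => j < i)).image s ∧ B.card = b ∧
              L = mis12 N x B (s i)} := by
        refine ⟨insert (s ℓ) B', ?_, ?_, rfl⟩
        · intro d hd
          rcases mem_insert.1 hd with h | h
          · subst h
            exact Finset.mem_image.2 ⟨ℓ, by simp [hℓi], rfl⟩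
          · obtain ⟨j, hj, rfl⟩ := Finset.mem_image.1 (hB'sub h)
            rw [mem_filter] at hj
            exact Finset.mem_image.2 ⟨j, by simp [lt_trans hj.2 hℓi], rfl⟩
        · rw [card_insert_of_notMem hanotin, hB'card]; omega
      calc Eopt12 N x s i b ≤ mis12 N x (insert (s ℓ) B') (s i) := Nat.sInf_le hmem2
        _ = mis12 N x B' (s ℓ) + min (cost12 N x (s ℓ) (s i) true)
              (cost12 N x (s ℓ) (s i) false) := hsplit
        _ = Eopt12 N x s ℓ (b - 1) + min (cost12 N x (s ℓ) (s i) true)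
              (cost12 N x (s ℓ) (s i) false) := by rw [← hB'val]; rfl
  · -- RHS ≤ LHS
    have hmem := Nat.sInf_mem (hNE i b hbi)
    obtain ⟨B, hBsub, hBcard, hBval⟩ := hmem
    have hBne : B.Nonempty := Finset.card_pos.1 (by omega)
    obtain ⟨ℓ₀, hℓ₀, haeq⟩ := Finset.mem_image.1 (hBsub (B.max'_mem hBne))
    rw [mem_filter] at hℓ₀
    have hℓ₀i : ℓ₀ < i := hℓ₀.2
    have hmemB : s ℓ₀ ∈ B := by rw [haeq]; exact B.max'_mem hBne
    have hB' : ∀ d ∈ B.erase (s ℓ₀), d < s ℓ₀ := by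
      intro d hd
      refine lt_of_le_of_ne ?_ (Finset.ne_of_mem_erase hd)
      rw [haeq]
      exact B.le_max' d (Finset.mem_of_mem_erase hd)
    have hsub' : B.erase (s ℓ₀) ⊆ (univ.filter (fun j : Fin m => j < ℓ₀)).image s := by
      intro d hd
      obtain ⟨j, hj, rfl⟩ := Finset.mem_image.1 (hBsub (Finset.mem_of_mem_erase hd))
      refine Finset.mem_image.2 ⟨j, ?_, rfl⟩
      rw [mem_filter]
      exact ⟨mem_univ _, hs.lt_iff_lt.1 (hB' _ hd)⟩
    have hcard' : (B.erase (s ℓ₀)).card = b - 1 := by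
      rw [Finset.card_erase_of_mem hmemB, hBcard]
    have hbℓ₀ : b - 1 ≤ (ℓ₀ : ℕ) := by
      have := Finset.card_le_card hsub'
      rw [hcard', hImg ℓ₀] at this
      exact this
    have hins : insert (s ℓ₀) (B.erase (s ℓ₀)) = B := Finset.insert_erase hmemB
    have hsplit : mis12 N x B (s i) =
        mis12 N x (B.erase (s ℓ₀)) (s ℓ₀) + min (cost12 N x (s ℓ₀) (s i) true)
          (cost12 N x (s ℓ₀) (s i) false) := by
      have h0 := mis12_split N x hB' (hs hℓ₀i)
      rw [hins] at h0
      exact h0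
    have hEle : Eopt12 N x s ℓ₀ (b - 1) ≤ mis12 N x (B.erase (s ℓ₀)) (s ℓ₀) :=
      Nat.sInf_le ⟨B.erase (s ℓ₀), hsub', hcard', rfl⟩
    have hRle : sInf {v | ∃ ℓ : Fin m, ℓ < i ∧ b - 1 ≤ (ℓ : ℕ) ∧
        v = Eopt12 N x s ℓ (b - 1) +
            min (cost12 N x (s ℓ) (s i) true) (cost12 N x (s ℓ) (s i) false)} ≤
        Eopt12 N x s ℓ₀ (b - 1) +
            min (cost12 N x (s ℓ₀) (s i) true) (cost12 N x (s ℓ₀) (s i) false) :=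
      Nat.sInf_le ⟨ℓ₀, hℓ₀i, hbℓ₀, rfl⟩
    calc sInf {v | ∃ ℓ : Fin m, ℓ < i ∧ b - 1 ≤ (ℓ : ℕ) ∧
        v = Eopt12 N x s ℓ (b - 1) +
            min (cost12 N x (s ℓ) (s i) true) (cost12 N x (s ℓ) (s i) false)} ≤
        Eopt12 N x s ℓ₀ (b - 1) +
            min (cost12 N x (s ℓ₀) (s i) true) (cost12 N x (s ℓ₀) (s i) false) := hRle
      _ ≤ mis12 N x (B.erase (s ℓ₀)) (s ℓ₀) +
            min (cost12 N x (s ℓ₀) (s i) true) (cost12 N x (s ℓ₀) (s i) false) :=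
          Nat.add_le_add_right hEle _
      _ = mis12 N x B (s i) := hsplit.symm
      _ = Eopt12 N x s i b := hBval.symm
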